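/- arXiv:1905.10504 — 2 statements merged into one kernel-verified Lean document; each statement's English description precedes it below -/
import Mathlib

section
/- Let n = 2k be even and m ≥ k. If F is an (n,m)-function such that the set S = {v ∈ F_2^m : x ↦ ⟨v, F(x)⟩ is not bent} has exactly 2^{m-k} elements, then S is an (m-k)-dimensional linear subspace of F_2^m. -/
open Finset

def chr (b : ZMod 2) : ℤ := if b = 0 then 1 else -1

def ip {n : ℕ} (a b : Fin n → ZMod 2) : ZMod 2 := ∑ i, a i * b i

def walshV {n : ℕ} (f : (Fin n → ZMod 2) → ZMod 2) (l : Fin n → ZMod 2) : ℤ :=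
  ∑ x, chr (f x + ip l x)

/-- `f` is bent on `F_2^{2k}`: all Walsh values are `±2^k`. -/
def IsBentV {n : ℕ} (k : ℕ) (f : (Fin n → ZMod 2) → ZMod 2) : Prop :=
  ∀ l, walshV f l = 2 ^ k ∨ walshV f l = -(2 ^ k)

open Module

lemma zmod2_cases (a : ZMod 2) : a = 0 ∨ a = 1 := by revert a; decide

lemma chr_zero : chr 0 = 1 := rfl

lemma chr_add_one (a : ZMod 2) : chr (a + 1) = - chr a := by revert a; decide

lemma ip_zero_left {n : ℕ} (x : Fin n → ZMod 2) : ip 0 x = 0 := by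
  simp [ip]

lemma walsh_zero {n : ℕ} (f : (Fin n → ZMod 2) → ZMod 2) :
    walshV f 0 = ∑ x, chr (f x) := by
  simp [walshV, ip_zero_left]

/-- ip as a linear map in the first argument. -/
def ipL {n : ℕ} (y : Fin n → ZMod 2) : (Fin n → ZMod 2) →ₗ[ZMod 2] ZMod 2 where
  toFun v := ip v y
  map_add' a b := by simp [ip, add_mul, Finset.sum_add_distrib]
  map_smul' c a := by simp [ip, Finset.mul_sum, mul_assoc]

lemma self_add_self {V : Type*} [AddCommGroup V] [Module (ZMod 2) V] (v : V) :
    v + v = 0 := by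
  have h2 : (2 : ZMod 2) • v = 0 := by
    rw [show (2 : ZMod 2) = 0 by decide, zero_smul]
  rwa [two_smul] at h2

lemma sum_chr_eq_zero {V : Type*} [AddCommGroup V] [Module (ZMod 2) V]
    (T : Submodule (ZMod 2) V) [Fintype T]
    (ℓ : V →ₗ[ZMod 2] ZMod 2) (v0 : V) (hv0 : v0 ∈ T) (hl : ℓ v0 ≠ 0) :
    ∑ v : T, chr (ℓ v) = 0 := by
  have hone : ℓ v0 = 1 := (zmod2_cases (ℓ v0)).resolve_left hl
  set w0 : T := ⟨v0, hv0⟩ with hw0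
  have hinv : ∀ w : T, w + w0 + w0 = w := by
    intro w
    rw [add_assoc, self_add_self, add_zero]
  have key : ∑ v : T, chr (ℓ v) = ∑ v : T, chr (ℓ (v + w0)) :=
    (Fintype.sum_equiv (Equiv.mk (fun w => w + w0) (fun w => w + w0)
      hinv hinv) _ _ (fun w => rfl)).symm
  have hterm : ∀ v : T, chr (ℓ ((v : V) + v0)) = - chr (ℓ v) := by
    intro v
    rw [show ℓ ((v : V) + v0) = ℓ v + 1 by rw [map_add, hone]]
    exact chr_add_one _
  simp only [hw0, hterm, Finset.sum_neg_distrib] at key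
  linarith [key]

variable {V : Type*} [AddCommGroup V] [Module (ZMod 2) V]

lemma zmod2_cases' (a : ZMod 2) : a = 0 ∨ a = 1 := by revert a; decide

lemma self_add_self' (v : V) : v + v = 0 := by
  have h2 : (2 : ZMod 2) • v = 0 := by
    rw [show (2 : ZMod 2) = 0 by decide, zero_smul]
  rwa [two_smul] at h2

lemma mem_span2 {x y : V} : x ∈ Submodule.span (ZMod 2) {y} ↔ x = 0 ∨ x = y := by
  rw [Submodule.mem_span_singleton]
  constructor
  · rintro ⟨c, rfl⟩
    rcases zmod2_cases' c with h | h <;> simp [h]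
  · rintro (rfl | rfl)
    · exact ⟨0, by simp⟩
    · exact ⟨1, by simp⟩

lemma card_submodule [FiniteDimensional (ZMod 2) V] (U : Submodule (ZMod 2) V) :
    Nat.card U = 2 ^ (finrank (ZMod 2) U) := by
  have : Finite V := Module.finite_of_finite (ZMod 2)
  have : Fintype U := Fintype.ofFinite U
  rw [Nat.card_eq_fintype_card, card_eq_pow_finrank (K := ZMod 2), ZMod.card]

lemma range_eq_top_of_ne_zero (ψ : V →ₗ[ZMod 2] ZMod 2) (v : V) (hv : ψ v ≠ 0) :
    LinearMap.range ψ = ⊤ := by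
  have h1 : ψ v = 1 := (zmod2_cases' (ψ v)).resolve_left hv
  rw [Submodule.eq_top_iff']
  intro c
  exact ⟨c • v, by rw [map_smul, h1, smul_eq_mul, mul_one]⟩

lemma ker_finrank [FiniteDimensional (ZMod 2) V] (ψ : V →ₗ[ZMod 2] ZMod 2)
    (v : V) (hv : ψ v ≠ 0) :
    finrank (ZMod 2) (LinearMap.ker ψ) + 1 = finrank (ZMod 2) V := by
  have h := LinearMap.finrank_range_add_finrank_ker ψ
  rw [range_eq_top_of_ne_zero ψ v hv] at h
  rw [finrank_top, finrank_self] at h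
  omega

lemma exists_T0 [FiniteDimensional (ZMod 2) V]
    (K U : Submodule (ZMod 2) V) (hUK : U ≤ K) (b : V) (hbK : b ∈ K) (hbU : b ∉ U) :
    ∃ T0 : Submodule (ZMod 2) V, T0 ≤ K ∧ (∀ x ∈ T0, x ∈ U → x = 0) ∧ b ∈ T0 ∧
      finrank (ZMod 2) T0 + finrank (ZMod 2) U = finrank (ZMod 2) K := by
  classical
  set b0 : K := ⟨b, hbK⟩ with hb0
  have hb0ne : b0 ≠ 0 := by
    intro h
    apply hbU
    have : b = 0 := by simpa [hb0] using congrArg (K.subtype) h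
    rw [this]; exact U.zero_mem
  set U0 : Submodule (ZMod 2) K := U.comap K.subtype with hU0
  have hbU0 : b0 ∉ U0 := by
    intro h
    exact hbU (by simpa [hU0, Submodule.mem_comap] using h)
  set M : Submodule (ZMod 2) K := U0 ⊔ Submodule.span (ZMod 2) {b0} with hM
  obtain ⟨C, hC⟩ := Submodule.exists_isCompl M
  set T0' : Submodule (ZMod 2) K := Submodule.span (ZMod 2) {b0} ⊔ C with hT0'
  refine ⟨T0'.map K.subtype, Submodule.map_subtype_le K T0', ?_, ?_, ?_⟩
  · -- trivial intersection with U
    rintro x hx hxU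
    obtain ⟨x0, hx0, rfl⟩ := Submodule.mem_map.mp hx
    have hx0U0 : x0 ∈ U0 := by simpa [hU0, Submodule.mem_comap] using hxU
    obtain ⟨w, hw, c, hc, hwc⟩ := Submodule.mem_sup.mp hx0
    rcases mem_span2.mp hw with rfl | rfl
    · -- x0 = 0 + c with c ∈ C and x0 ∈ U0 ≤ M so c ∈ M ⊓ C = ⊥
      rw [zero_add] at hwc
      subst hwc
      have hcM : c ∈ M := le_sup_left (α := Submodule (ZMod 2) K) hx0U0
      have hc0 : c = 0 := Submodule.disjoint_def.mp hC.disjoint c hcM hc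
      simp [hc0]
    · -- x0 = b0 + c
      have hcM : c ∈ M := by
        have hb0M : b0 ∈ M := le_sup_right (α := Submodule (ZMod 2) K)
          (Submodule.mem_span_singleton_self b0)
        have : c = x0 + b0 := by
          rw [← hwc]; rw [add_comm b0 c, add_assoc, self_add_self', add_zero]
        rw [this]
        exact M.add_mem (le_sup_left (α := Submodule (ZMod 2) K) hx0U0) hb0M
      have hc0 : c = 0 := Submodule.disjoint_def.mp hC.disjoint c hcM hc
      rw [hc0, add_zero] at hwc
      exact absurd (hwc ▸ hx0U0) hbU0
  · exact Submodule.mem_map.mpr ⟨b0, le_sup_left (α := Submodule (ZMod 2) K)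
      (Submodule.mem_span_singleton_self b0), rfl⟩
  · -- finrank computation
    rw [Submodule.finrank_map_subtype_eq]
    have hU0rk : finrank (ZMod 2) U0 = finrank (ZMod 2) U := by
      have : U0.map K.subtype = U := by
        rw [hU0, Submodule.map_comap_subtype, inf_eq_right.mpr hUK]
      rw [← this, Submodule.finrank_map_subtype_eq]
    have hMrk : finrank (ZMod 2) M = finrank (ZMod 2) U0 + 1 := by
      have hinf : U0 ⊓ Submodule.span (ZMod 2) {b0} = ⊥ := by
        rw [eq_bot_iff]
        rintro x ⟨hxU, hxs⟩
        rcases mem_span2.mp hxs with rfl | rfl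
        · simp
        · exact absurd hxU hbU0
      have := Submodule.finrank_sup_add_finrank_inf_eq U0 (Submodule.span (ZMod 2) {b0})
      rw [hinf, finrank_bot, finrank_span_singleton hb0ne, ← hM] at this
      omega
    have hCM : finrank (ZMod 2) M + finrank (ZMod 2) C = finrank (ZMod 2) ↥K :=
      Submodule.finrank_add_eq_of_isCompl hC
    have hT0rk : finrank (ZMod 2) T0' = finrank (ZMod 2) C + 1 := by
      have hinf : Submodule.span (ZMod 2) {b0} ⊓ C = ⊥ := by
        rw [eq_bot_iff]
        rintro x ⟨hxs, hxC⟩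
        rcases mem_span2.mp hxs with rfl | rfl
        · simp
        · have hb0M : b0 ∈ M := le_sup_right (α := Submodule (ZMod 2) K)
            (Submodule.mem_span_singleton_self b0)
          exact absurd (Submodule.disjoint_def.mp hC.disjoint b0 hb0M hxC) hb0ne

      have := Submodule.finrank_sup_add_finrank_inf_eq
        (Submodule.span (ZMod 2) {b0}) C
      rw [hinf, finrank_bot, finrank_span_singleton hb0ne, ← hT0'] at this
      omega
    omega

lemma avoid_subspace [FiniteDimensional (ZMod 2) V]
    (A : Set V) (φ : V →ₗ[ZMod 2] ZMod 2) (U T0 : Submodule (ZMod 2) V) (kk : ℕ)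
    (hAU : ∀ a ∈ A, φ a = 0 → a ∈ U)
    (hT0K : ∀ x ∈ T0, φ x = 0)
    (hT0U : ∀ x ∈ T0, x ∈ U → x = 0)
    (hT0rk : finrank (ZMod 2) T0 = kk)
    (y : V) (hy : φ y = 1) (hyA : ∀ s ∈ T0, y + s ∉ A) :
    ∃ T : Submodule (ZMod 2) V,
      finrank (ZMod 2) T = kk + 1 ∧ ∀ v ∈ T, v ≠ 0 → v ∉ A := by
  have hyne : y ≠ 0 := by
    intro h; rw [h, map_zero] at hy; exact one_ne_zero hy.symm
  refine ⟨T0 ⊔ Submodule.span (ZMod 2) {y}, ?_, ?_⟩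
  · have hinf : T0 ⊓ Submodule.span (ZMod 2) {y} = ⊥ := by
      rw [eq_bot_iff]
      rintro x ⟨hxT, hxs⟩
      rcases mem_span2.mp hxs with rfl | hxy
      · simp
      · have h0 : φ x = 0 := hT0K x hxT
        rw [hxy, hy] at h0
        exact absurd h0 one_ne_zero
    have := Submodule.finrank_sup_add_finrank_inf_eq T0 (Submodule.span (ZMod 2) {y})
    rw [hinf, finrank_bot, finrank_span_singleton hyne, hT0rk] at this
    omega
  · rintro v hv hvne hvA
    obtain ⟨s, hs, w, hw, hswv⟩ := Submodule.mem_sup.mp hv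
    rcases mem_span2.mp hw with rfl | hwy
    · rw [add_zero] at hswv
      subst hswv
      exact hvne (hT0U s hs (hAU s hvA (hT0K s hs)))
    · have hv' : v = y + s := by rw [← hswv, hwy, add_comm]
      exact hyA s hs (hv' ▸ hvA)

lemma nyberg {k m : ℕ} (hk : 0 < k) (F : (Fin (2*k) → ZMod 2) → (Fin m → ZMod 2))
    (T : Submodule (ZMod 2) (Fin m → ZMod 2)) (hT : finrank (ZMod 2) T = k + 1)
    (hbent : ∀ v ∈ T, v ≠ 0 → IsBentV k (fun x => ip v (F x))) : False := by
  classical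
  have : Fintype T := Fintype.ofFinite T
  have hcardT : Fintype.card T = 2 ^ (k + 1) := by
    rw [card_eq_pow_finrank (K := ZMod 2), hT, ZMod.card]
  set R := ZMod (2 ^ (k + 1)) with hR
  have hpow0 : ((2 : R) ^ (k + 1)) = 0 := by
    have := ZMod.natCast_self (2 ^ (k + 1))
    push_cast at this
    exact this
  set Sint : ℤ := ∑ v : T, walshV (fun x => ip (v : Fin m → ZMod 2) (F x)) 0 with hSint
  -- Step A : Sint ≡ 0
  have stepA : ((Sint : R)) = 0 := by
    have h1 : Sint = ∑ x : Fin (2*k) → ZMod 2, ∑ v : T, chr (ip (v : Fin m → ZMod 2) (F x)) := by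
      rw [hSint]
      simp only [walshV, ip_zero_left, add_zero]
      exact Finset.sum_comm
    rw [h1, Int.cast_sum]
    apply Finset.sum_eq_zero
    intro x _
    by_cases hx : ∃ v0 ∈ T, ip v0 (F x) ≠ 0
    · obtain ⟨v0, hv0, hne⟩ := hx
      have h0 := sum_chr_eq_zero T (ipL (F x)) v0 hv0 hne
      simp only [ipL, LinearMap.coe_mk, AddHom.coe_mk] at h0
      rw [show ∑ v : T, chr (ip (v : Fin m → ZMod 2) (F x)) = 0 from h0, Int.cast_zero]
    · push_neg at hx
      have hone : ∀ v : T, chr (ip (v : Fin m → ZMod 2) (F x)) = 1 := by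
        intro v; rw [hx v v.2, chr_zero]
      rw [show (∑ v : T, chr (ip (v : Fin m → ZMod 2) (F x))) = 2 ^ (k + 1) from by
        rw [Finset.sum_congr rfl fun v _ => hone v, Finset.sum_const, Finset.card_univ, hcardT]
        simp]
      push_cast
      exact hpow0
  -- Step B : Sint ≡ 2^k  mod 2^(k+1)
  have hzero_mem : (0 : Fin m → ZMod 2) ∈ T := T.zero_mem
  have hw0 : walshV (fun x => ip ((0 : T) : Fin m → ZMod 2) (F x)) 0 = 2 ^ (2 * k) := by
    simp only [walshV, Submodule.coe_zero, ip_zero_left, add_zero, chr_zero]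
    rw [Finset.sum_const, Finset.card_univ]
    simp [ZMod.card]
  have hsplit : Sint = walshV (fun x => ip ((0 : T) : Fin m → ZMod 2) (F x)) 0
      + ∑ v ∈ Finset.univ.erase (0 : T), walshV (fun x => ip (v : Fin m → ZMod 2) (F x)) 0 := by
    rw [hSint, ← Finset.add_sum_erase _ _ (Finset.mem_univ (0 : T))]
  have h2k : ((2 : R) ^ (2 * k)) = 0 := by
    have : 2 * k = (k + 1) + (k - 1) := by omega
    rw [this, pow_add, hpow0, zero_mul]
  have hterm : ∀ v ∈ Finset.univ.erase (0 : T),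
      ((walshV (fun x => ip (v : Fin m → ZMod 2) (F x)) 0 : R)) = 2 ^ k := by
    intro v hv
    have hvne : (v : Fin m → ZMod 2) ≠ 0 := by
      intro h
      apply Finset.ne_of_mem_erase hv
      exact Subtype.ext h
    rcases hbent v v.2 hvne 0 with h | h
    · rw [h]; push_cast; ring
    · rw [h]
      push_cast
      have h2 : (2 : R) ^ k + 2 ^ k = 0 := by
        rw [← two_mul, ← pow_succ']
        exact hpow0
      linear_combination -h2
  have hcount : (Finset.univ.erase (0 : T)).card = 2 ^ (k + 1) - 1 := by
    rw [Finset.card_erase_of_mem (Finset.mem_univ _), Finset.card_univ, hcardT]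
  have stepB : ((Sint : R)) = 2 ^ k := by
    rw [hsplit, hw0, Int.cast_add, Int.cast_sum, Finset.sum_congr rfl hterm,
      Finset.sum_const, hcount]
    have h1 : ((2 ^ (k + 1) - 1 : ℕ) : R) = -1 := by
      have h0 : ((2 ^ (k + 1) : ℕ) : R) = 0 := by
        push_cast; exact hpow0
      have hle : 1 ≤ 2 ^ (k + 1) := Nat.one_le_two_pow
      push_cast [Nat.cast_sub hle] at h0 ⊢
      rw [h0]; ring
    rw [nsmul_eq_mul, h1]
    push_cast
    rw [h2k]
    have h2 : (2 : R) ^ k + 2 ^ k = 0 := by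
      rw [← two_mul, ← pow_succ']; exact hpow0
    linear_combination -h2
  rw [stepA] at stepB
  -- 2^k = 0 in ZMod 2^(k+1) is false
  have : ((2 ^ k : ℕ) : R) = 0 := by push_cast; exact stepB.symm
  rw [ZMod.natCast_eq_zero_iff] at this
  have hle := Nat.le_of_dvd (pow_pos (by norm_num) k) this
  have : (2:ℕ) ^ k < 2 ^ (k + 1) := Nat.pow_lt_pow_right (by norm_num) (by omega)
  omega

lemma bose_burton (n : ℕ) :
    ∀ (V : Type) (_ : AddCommGroup V) (_ : Module (ZMod 2) V)
      (_ : FiniteDimensional (ZMod 2) V),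
      finrank (ZMod 2) V = n →
      ∀ (k : ℕ) (A : Set V), 0 < k → k ≤ n → (0 : V) ∈ A →
        A.ncard ≤ 2 ^ (n - k) →
        (∀ T : Submodule (ZMod 2) V, finrank (ZMod 2) T = k + 1 →
            ∃ v ∈ T, v ≠ 0 ∧ v ∈ A) →
        ∃ W : Submodule (ZMod 2) V, (W : Set V) = A ∧ finrank (ZMod 2) W = n - k := by
  induction n using Nat.strong_induction_on with
  | _ n IH =>
  intro V _ _ _ hrk k A hk hkn h0A hcard hblock
  classical
  have hVfin : Finite V := Module.finite_of_finite (ZMod 2)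
  by_cases hnk : n = k
  · -- base case : A = {0}
    subst hnk
    have hA1 : A.ncard ≤ 1 := by simpa using hcard
    have hsub : A ⊆ {0} := by
      intro x hx
      by_contra hxne
      have h1 : 1 < A.ncard :=
        (Set.one_lt_ncard (Set.toFinite A)).mpr ⟨x, hx, 0, h0A, hxne⟩
      omega
    have hA0 : A = {0} := subset_antisymm hsub (Set.singleton_subset_iff.mpr h0A)
    refine ⟨⊥, ?_, ?_⟩
    · rw [Submodule.bot_coe, hA0]
    · rw [finrank_bot]; omega
  have hlt : k < n := lt_of_le_of_ne hkn (fun h => hnk h.symm)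
  -- Step case
  have hDfin : Finite (Module.Dual (ZMod 2) V) :=
    Finite.of_injective _ DFunLike.coe_injective
  have hVfty : Fintype V := Fintype.ofFinite V
  have hDfty : Fintype (Module.Dual (ZMod 2) V) := Fintype.ofFinite _
  set cnt : Module.Dual (ZMod 2) V → ℕ :=
    fun φ => (univ.filter (fun a : V => a ∈ A ∧ φ a = 0)).card with hcnt
  -- counting functionals vanishing at a point
  have hDrk : finrank (ZMod 2) (Module.Dual (ZMod 2) V) = n := by
    rw [Subspace.dual_finrank_eq, hrk]
  have hDcard : Fintype.card (Module.Dual (ZMod 2) V) = 2 ^ n := by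
    rw [card_eq_pow_finrank (K := ZMod 2), ZMod.card, hDrk]
  have hcnt_pt : ∀ a : V, a ≠ 0 →
      (univ.filter (fun φ : Module.Dual (ZMod 2) V => φ a = 0)).card = 2 ^ (n - 1) := by
    intro a ha
    have hex : ∃ φ0 : Module.Dual (ZMod 2) V, φ0 a ≠ 0 := by
      by_contra h
      push_neg at h
      exact ha ((Module.forall_dual_apply_eq_zero_iff (ZMod 2) a).mp h)
    obtain ⟨φ0, hφ0⟩ := hex
    set ev : Module.Dual (ZMod 2) (Module.Dual (ZMod 2) V) :=
      Module.Dual.eval (ZMod 2) V a with hev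
    have hevapp : ∀ φ : Module.Dual (ZMod 2) V, ev φ = φ a := fun φ => rfl
    have hkerrk : finrank (ZMod 2) (LinearMap.ker ev) + 1 = n := by
      rw [← hDrk]
      exact ker_finrank ev φ0 (by rw [hevapp]; exact hφ0)
    have : (univ.filter (fun φ : Module.Dual (ZMod 2) V => φ a = 0)).card
        = Nat.card (LinearMap.ker ev) := by
      rw [Nat.card_eq_fintype_card, ← Fintype.card_subtype]
      apply Fintype.card_congr
      exact Equiv.subtypeEquivRight (fun φ => by
        rw [LinearMap.mem_ker, hevapp])
    rw [this, card_submodule]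
    congr 1
    omega
  have hAfin : A.Finite := Set.toFinite A
  have hAcard_pos : 1 ≤ A.ncard := by
    have : A.Nonempty := ⟨0, h0A⟩
    have := Set.ncard_pos hAfin |>.mpr this
    omega
  -- the total count over all functionals
  have htotal : ∑ φ : Module.Dual (ZMod 2) V, cnt φ
      = 2 ^ n + (A.ncard - 1) * 2 ^ (n - 1) := by
    have h1 : ∀ φ : Module.Dual (ZMod 2) V,
        cnt φ = ∑ a ∈ A.toFinset, (if φ a = 0 then 1 else 0) := by
      intro φ
      simp only [hcnt]
      rw [show (univ.filter (fun a : V => a ∈ A ∧ φ a = 0))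
          = (A.toFinset.filter (fun a => φ a = 0)) from by
        ext a; simp [Set.mem_toFinset]]
      rw [Finset.card_filter]
    simp only [h1]
    rw [Finset.sum_comm]
    have h2 : ∀ a ∈ A.toFinset, (∑ φ : Module.Dual (ZMod 2) V, if φ a = 0 then 1 else 0)
        = (univ.filter (fun φ : Module.Dual (ZMod 2) V => φ a = 0)).card := by
      intro a _
      rw [Finset.card_filter]
    rw [Finset.sum_congr rfl h2]
    have h0mem : (0 : V) ∈ A.toFinset := Set.mem_toFinset.mpr h0A
    rw [← Finset.add_sum_erase _ _ h0mem]
    have h3 : (univ.filter (fun φ : Module.Dual (ZMod 2) V => φ (0:V) = 0)).card = 2 ^ n := by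
      rw [show (univ.filter (fun φ : Module.Dual (ZMod 2) V => φ (0:V) = 0)) = univ from by
        ext φ; simp]
      rw [Finset.card_univ, hDcard]
    rw [h3]
    congr 1
    rw [Finset.sum_congr rfl (fun a ha => hcnt_pt a (Finset.ne_of_mem_erase ha)),
      Finset.sum_const, Finset.card_erase_of_mem h0mem, smul_eq_mul]
    rw [Set.ncard_eq_toFinset_card' A]
  -- pigeonhole
  have hpigeon : ∃ φ : Module.Dual (ZMod 2) V, φ ≠ 0 ∧ cnt φ ≤ 2 ^ (n - 1 - k) := by
    by_contra hcon
    push_neg at hcon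
    have hge : ∀ φ ∈ (univ.erase (0 : Module.Dual (ZMod 2) V)),
        2 ^ (n - 1 - k) + 1 ≤ cnt φ := by
      intro φ hφ
      exact hcon φ (Finset.ne_of_mem_erase hφ)
    have hsum_ge : (2 ^ n - 1) * (2 ^ (n - 1 - k) + 1)
        ≤ ∑ φ ∈ univ.erase (0 : Module.Dual (ZMod 2) V), cnt φ := by
      calc (2 ^ n - 1) * (2 ^ (n - 1 - k) + 1)
          = (univ.erase (0 : Module.Dual (ZMod 2) V)).card * (2 ^ (n - 1 - k) + 1) := by
            rw [Finset.card_erase_of_mem (Finset.mem_univ _), Finset.card_univ, hDcard]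
        _ ≤ _ := by
            rw [← smul_eq_mul]
            exact Finset.card_nsmul_le_sum _ _ _ hge
    have hcnt0 : cnt 0 = A.ncard := by
      simp only [hcnt]
      rw [Set.ncard_eq_toFinset_card' A]
      congr 1
      ext a; simp [Set.mem_toFinset]
    have hsplit0 : ∑ φ : Module.Dual (ZMod 2) V, cnt φ
        = cnt 0 + ∑ φ ∈ univ.erase (0 : Module.Dual (ZMod 2) V), cnt φ := by
      rw [← Finset.add_sum_erase _ _ (Finset.mem_univ (0 : Module.Dual (ZMod 2) V))]
    -- arithmetic contradiction
    set a := A.ncard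
    set P := 2 ^ (n - 1 - k) with hP
    set E := 2 ^ k with hE
    have hQ : 2 ^ (n - 1) = P * E := by
      rw [hP, hE, ← pow_add]
      congr 1
      omega
    have h2n : 2 ^ n = 2 * (P * E) := by
      rw [← hQ, ← pow_succ']
      congr 1
      omega
    have hnk' : 2 ^ (n - k) = 2 * P := by
      rw [hP, ← pow_succ']
      congr 1
      omega
    have hE2 : 2 ≤ E := by
      rw [hE]
      calc 2 = 2 ^ 1 := (pow_one 2).symm
      _ ≤ 2 ^ k := Nat.pow_le_pow_right (by norm_num) hk
    have hP1 : 1 ≤ P := Nat.one_le_two_pow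
    have hkey : 2 * (P * E) + (a - 1) * (P * E) ≥ a + (2 * (P * E) - 1) * (P + 1) := by
      rw [← h2n, ← hQ]
      calc 2 ^ n + (a - 1) * 2 ^ (n - 1) = ∑ φ : Module.Dual (ZMod 2) V, cnt φ := htotal.symm
        _ = cnt 0 + ∑ φ ∈ univ.erase (0 : Module.Dual (ZMod 2) V), cnt φ := hsplit0
        _ ≥ a + (2 ^ n - 1) * (2 ^ (n - 1 - k) + 1) := by
            rw [hcnt0]
            exact Nat.add_le_add le_rfl hsum_ge
    have hcard' : a ≤ 2 * P := by rw [← hnk']; exact hcard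
    -- derive contradiction
    obtain ⟨a1, ha1eq⟩ : ∃ a1, a = a1 + 1 := ⟨a - 1, by omega⟩
    rw [ha1eq] at hkey hcard'
    have hsub1 : a1 + 1 - 1 = a1 := by omega
    rw [hsub1] at hkey
    have hPE2 : 1 ≤ 2 * (P * E) := by
      have : 0 < P * E := Nat.mul_pos (by omega) (by omega)
      omega
    zify [hPE2] at hkey
    have hQ0 : (0:ℤ) ≤ (P:ℤ) * E := by positivity
    have ha1 : (a1 : ℤ) ≤ 2 * (P:ℤ) - 1 := by
      have : (a1 : ℤ) + 1 ≤ 2 * P := by exact_mod_cast hcard'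
      linarith
    have f1 := mul_le_mul_of_nonneg_right ha1 hQ0
    have f2 : 2 * (P:ℤ) ≤ (P:ℤ) * E := by
      have h := mul_le_mul_of_nonneg_left (show (2:ℤ) ≤ E by exact_mod_cast hE2)
        (show (0:ℤ) ≤ P by positivity)
      linarith
    have hP1' : (1:ℤ) ≤ P := by exact_mod_cast hP1
    have ha10 : (0:ℤ) ≤ (a1:ℤ) := Int.natCast_nonneg a1
    linarith [hkey, f1, f2]
  -- use the good hyperplane
  obtain ⟨φ, hφne, hφcnt⟩ := hpigeon
  obtain ⟨v1, hv1⟩ : ∃ v, φ v ≠ 0 := by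
    by_contra h
    push_neg at h
    exact hφne (LinearMap.ext fun v => by rw [h v, LinearMap.zero_apply])
  have hv1' : φ v1 = 1 := (zmod2_cases' _).resolve_left hv1
  set K := LinearMap.ker φ with hKdef
  have hKrk : finrank (ZMod 2) K = n - 1 := by
    have h := ker_finrank φ v1 hv1
    rw [hrk] at h
    rw [hKdef]
    omega
  -- the subset of K
  set A' : Set K := {x : K | (x : V) ∈ A} with hA'def
  have h0A' : (0 : K) ∈ A' := h0A
  have hA'card : A'.ncard = cnt φ := by
    rw [← Nat.card_coe_set_eq]
    simp only [hcnt]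
    rw [← Fintype.card_subtype, ← Nat.card_eq_fintype_card]
    apply Nat.card_congr
    exact {
      toFun := fun x => ⟨(x.1 : V), x.2, x.1.2⟩
      invFun := fun a => ⟨⟨a.1, LinearMap.mem_ker.mpr a.2.2⟩, a.2.1⟩
      left_inv := fun x => by ext; rfl
      right_inv := fun a => by ext; rfl }
  have hblock' : ∀ T' : Submodule (ZMod 2) K, finrank (ZMod 2) T' = k + 1 →
      ∃ v ∈ T', v ≠ 0 ∧ v ∈ A' := by
    intro T' hT'
    have hTrk : finrank (ZMod 2) (T'.map K.subtype) = k + 1 := by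
      rw [Submodule.finrank_map_subtype_eq]; exact hT'
    obtain ⟨v, hvT, hvne, hvA⟩ := hblock (T'.map K.subtype) hTrk
    obtain ⟨v0, hv0T, hv0v⟩ := Submodule.mem_map.mp hvT
    refine ⟨v0, hv0T, ?_, ?_⟩
    · intro h
      apply hvne
      rw [← hv0v, h]; rfl
    · show (v0 : V) ∈ A
      rw [show (v0 : V) = v from hv0v]; exact hvA
  obtain ⟨W', hW'set, hW'rk⟩ := IH (n - 1) (by omega) K inferInstance inferInstance
    inferInstance hKrk k A' hk (by omega) h0A'
    (by rw [hA'card]; exact hφcnt) hblock'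
  -- lift to V
  set U := W'.map K.subtype with hUdef
  have hUK : U ≤ K := Submodule.map_subtype_le K W'
  have hUrk : finrank (ZMod 2) U = n - 1 - k := by
    rw [hUdef, Submodule.finrank_map_subtype_eq, hW'rk]
  have hUset : (U : Set V) = {a : V | a ∈ A ∧ φ a = 0} := by
    ext x
    constructor
    · intro hx
      obtain ⟨x0, hx0W, hx0x⟩ := Submodule.mem_map.mp hx
      have hx0A' : x0 ∈ A' := by rw [← SetLike.mem_coe, hW'set] at hx0W; exact hx0W
      exact ⟨by rw [← hx0x]; exact hx0A', by rw [← hx0x]; exact LinearMap.mem_ker.mp x0.2⟩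
    · rintro ⟨hxA, hxK⟩
      have hx0 : (⟨x, LinearMap.mem_ker.mpr hxK⟩ : K) ∈ W' := by
        rw [← SetLike.mem_coe, hW'set]
        exact hxA
      exact Submodule.mem_map.mpr ⟨_, hx0, rfl⟩
  have hUA : (U : Set V) ⊆ A := by rw [hUset]; exact fun x hx => hx.1
  -- the odd part of A
  set A₁ : Set V := {a : V | a ∈ A ∧ φ a = 1} with hA₁def
  have hA₁A : A₁ ⊆ A := fun x hx => hx.1
  have hsplitA : A = (U : Set V) ∪ A₁ := by
    rw [hUset]
    ext x
    constructor
    · intro hx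
      rcases zmod2_cases' (φ x) with h | h
      · exact Or.inl ⟨hx, h⟩
      · exact Or.inr ⟨hx, h⟩
    · rintro (⟨h, _⟩ | ⟨h, _⟩) <;> exact h
  have hdisj : Disjoint (U : Set V) A₁ := by
    rw [hUset, Set.disjoint_left]
    rintro x ⟨_, h0⟩ ⟨_, h1⟩
    rw [h0] at h1
    exact one_ne_zero h1.symm
  have hU_ncard : (U : Set V).ncard = 2 ^ (n - 1 - k) := by
    rw [← Nat.card_coe_set_eq]
    rw [show Nat.card (U : Set V) = Nat.card U from
      Nat.card_congr (Equiv.subtypeEquivRight (fun x => SetLike.mem_coe))]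
    rw [card_submodule, hUrk]
  have hA₁_le : A₁.ncard ≤ 2 ^ (n - 1 - k) := by
    have := Set.ncard_union_eq hdisj (Set.toFinite _) (Set.toFinite _)
    rw [← hsplitA] at this
    have h2 : (2:ℕ) ^ (n - k) = 2 ^ (n - 1 - k) + 2 ^ (n - 1 - k) := by
      rw [← two_mul, ← pow_succ']
      congr 1
      omega
    rw [this, hU_ncard] at hcard
    omega
  -- cardinality of the affine hyperplane {φ = 1}
  have hY1card : Nat.card {y : V // φ y = 1} = 2 ^ (n - 1) := by
    have e : {y : V // φ y = 1} ≃ K := {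
        toFun := fun y => ⟨y.1 + v1, by
          rw [LinearMap.mem_ker, map_add, y.2, hv1']; decide⟩
        invFun := fun x => ⟨x.1 + v1, by
          rw [map_add, LinearMap.mem_ker.mp x.2, hv1', zero_add]⟩
        left_inv := fun y => by
          ext; show y.1 + v1 + v1 = y.1
          rw [add_assoc, self_add_self', add_zero]
        right_inv := fun x => by
          ext; show x.1 + v1 + v1 = x.1
          rw [add_assoc, self_add_self', add_zero] }
    rw [Nat.card_congr e, card_submodule, hKrk]
  -- the key surjectivity/injectivity for suitable T0
  have hkey : ∀ T0 : Submodule (ZMod 2) V, T0 ≤ K → (∀ x ∈ T0, x ∈ U → x = 0) →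
      finrank (ZMod 2) T0 = k →
      A₁.ncard = 2 ^ (n - 1 - k) ∧
      ∀ a a' s s' : V, a ∈ A₁ → a' ∈ A₁ → s ∈ T0 → s' ∈ T0 → a + s = a' + s' →
        a = a' ∧ s = s' := by
    intro T0 hT0le hT0U hT0rk
    have hT0K : ∀ x ∈ T0, φ x = 0 := fun x hx => LinearMap.mem_ker.mp (hT0le hx)
    -- surjectivity of (a, s) ↦ a + s onto {φ = 1}
    have hsurj : ∀ y : V, φ y = 1 → ∃ a ∈ A₁, ∃ s ∈ T0, a + s = y := by
      intro y hy
      by_contra hcon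
      push_neg at hcon
      have hyA : ∀ s ∈ T0, y + s ∉ A := by
        intro s hs hmem
        have hφys : φ (y + s) = 1 := by rw [map_add, hy, hT0K s hs, add_zero]
        exact hcon (y + s) ⟨hmem, hφys⟩ s hs
          (by rw [add_assoc, self_add_self', add_zero])
      obtain ⟨T, hTrk, hTA⟩ := avoid_subspace A φ U T0 k
        (fun a ha h0 => by
          have : a ∈ (U : Set V) := by rw [hUset]; exact ⟨ha, h0⟩
          exact this)
        hT0K hT0U hT0rk y hy hyA
      obtain ⟨v, hvT, hvne, hvA⟩ := hblock T hTrk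
      exact hTA v hvT hvne hvA
    -- set up the bijection
    set g : A₁ × T0 → {y : V // φ y = 1} := fun p =>
      ⟨p.1.1 + p.2.1, by rw [map_add, p.1.2.2, hT0K _ p.2.2, add_zero]⟩ with hg
    have hgsurj : Function.Surjective g := by
      rintro ⟨y, hy⟩
      obtain ⟨a, ha, s, hs, heq⟩ := hsurj y hy
      exact ⟨⟨⟨a, ha⟩, ⟨s, hs⟩⟩, Subtype.ext heq⟩
    have hdomcard : Nat.card (A₁ × T0) = A₁.ncard * 2 ^ k := by
      rw [Nat.card_prod, Nat.card_coe_set_eq, card_submodule, hT0rk]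
    have hle := Nat.card_le_card_of_surjective g hgsurj
    rw [hY1card, hdomcard] at hle
    have hpow : (2:ℕ) ^ (n - 1) = 2 ^ (n - 1 - k) * 2 ^ k := by
      rw [← pow_add]
      congr 1
      omega
    have hA₁_eq : A₁.ncard = 2 ^ (n - 1 - k) := by
      by_contra hne
      have hlt2 : A₁.ncard < 2 ^ (n - 1 - k) := lt_of_le_of_ne hA₁_le hne
      have : A₁.ncard * 2 ^ k < 2 ^ (n - 1 - k) * 2 ^ k :=
        (Nat.mul_lt_mul_right (pow_pos (by norm_num) k)).mpr hlt2
      omega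
    refine ⟨hA₁_eq, ?_⟩
    have hcards : Nat.card (A₁ × T0) = Nat.card {y : V // φ y = 1} := by
      rw [hdomcard, hA₁_eq, hY1card, hpow]
    have : Fintype (A₁ × T0) := Fintype.ofFinite _
    have : Fintype {y : V // φ y = 1} := Fintype.ofFinite _
    have hgbij : Function.Bijective g := by
      rw [Fintype.bijective_iff_surjective_and_card]
      refine ⟨hgsurj, ?_⟩
      rw [← Nat.card_eq_fintype_card, ← Nat.card_eq_fintype_card]
      exact hcards
    intro a a' s s' ha ha' hs hs' heq
    have := hgbij.1 (a₁ := (⟨⟨a, ha⟩, ⟨s, hs⟩⟩ : A₁ × T0))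
      (a₂ := (⟨⟨a', ha'⟩, ⟨s', hs'⟩⟩ : A₁ × T0)) (Subtype.ext heq)
    have h12 := Prod.ext_iff.mp this
    exact ⟨Subtype.ext_iff.mp h12.1, Subtype.ext_iff.mp h12.2⟩
  -- get one suitable T0 to pin down the cardinality of A₁
  have hUneK : U ≠ K := by
    intro h
    rw [h] at hUrk
    omega
  obtain ⟨b0, hb0K, hb0U⟩ := SetLike.exists_of_lt (lt_of_le_of_ne hUK hUneK)
  have hT0_rank : ∀ T0 : Submodule (ZMod 2) V,
      finrank (ZMod 2) T0 + finrank (ZMod 2) U = finrank (ZMod 2) K →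
      finrank (ZMod 2) T0 = k := by
    intro T0 h
    rw [hUrk, hKrk] at h
    omega
  obtain ⟨T0, hT0le, hT0U, _, hT0rk⟩ := exists_T0 K U hUK b0 hb0K hb0U
  obtain ⟨hA₁card, _⟩ := hkey T0 hT0le hT0U (hT0_rank T0 hT0rk)
  -- A₁ is nonempty
  have hA₁ne : A₁.Nonempty := by
    rw [← Set.ncard_pos (Set.toFinite A₁), hA₁card]
    positivity
  obtain ⟨a0, ha0⟩ := hA₁ne
  -- closure : for all a' ∈ A₁, a0 + a' ∈ U
  have hclosure : ∀ a' ∈ A₁, a0 + a' ∈ U := by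
    intro a' ha'
    by_cases heq : a' = a0
    · rw [heq, self_add_self']
      exact U.zero_mem
    by_contra hbU2
    have hbK2 : a0 + a' ∈ K := by
      rw [hKdef, LinearMap.mem_ker, map_add, ha0.2, ha'.2]
      decide
    obtain ⟨T0', hT0'le, hT0'U, hbT0', hT0'rk⟩ := exists_T0 K U hUK (a0 + a') hbK2 hbU2
    obtain ⟨_, hinj⟩ := hkey T0' hT0'le hT0'U (hT0_rank T0' hT0'rk)
    have hcollide : a0 + (a0 + a') = a' + 0 := by
      rw [← add_assoc, self_add_self', zero_add, add_zero]
    have := (hinj a0 a' (a0 + a') 0 ha0 ha' hbT0' T0'.zero_mem hcollide).1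
    exact heq this.symm
  -- A₁ = a0 + U
  have himg : A₁ = (fun u => a0 + u) '' (U : Set V) := by
    apply Set.eq_of_subset_of_ncard_le
    · intro a' ha'
      exact ⟨a0 + a', hclosure a' ha', by
        show a0 + (a0 + a') = a'
        rw [← add_assoc, self_add_self', zero_add]⟩
    · rw [Set.ncard_image_of_injective _ (add_right_injective a0), hU_ncard, hA₁card]
    · exact Set.toFinite _
  -- final submodule
  have ha0ne : a0 ≠ 0 := by
    intro h
    have := ha0.2
    rw [h, map_zero] at this
    exact one_ne_zero this.symm
  have ha0U : a0 ∉ U := by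
    intro h
    have := LinearMap.mem_ker.mp (hUK h)
    rw [ha0.2] at this
    exact one_ne_zero this
  refine ⟨U ⊔ Submodule.span (ZMod 2) {a0}, ?_, ?_⟩
  · ext x
    simp only [SetLike.mem_coe]
    constructor
    · intro hx
      obtain ⟨u, hu, w, hw, huw⟩ := Submodule.mem_sup.mp hx
      rcases mem_span2.mp hw with rfl | hwa
      · rw [add_zero] at huw
        exact huw ▸ hUA hu
      · have : x = a0 + u := by rw [← huw, hwa, add_comm]
        rw [this]
        exact hA₁A (himg ▸ ⟨u, hu, rfl⟩)
    · intro hxA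
      rcases zmod2_cases' (φ x) with h | h
      · apply Submodule.mem_sup_left
        have : x ∈ (U : Set V) := by rw [hUset]; exact ⟨hxA, h⟩
        exact this
      · have hx1 : x ∈ A₁ := ⟨hxA, h⟩
        rw [himg] at hx1
        obtain ⟨u, hu, rfl⟩ := hx1
        exact Submodule.add_mem _
          (Submodule.mem_sup_right (Submodule.mem_span_singleton_self a0))
          (Submodule.mem_sup_left hu)
  · have hinf : U ⊓ Submodule.span (ZMod 2) {a0} = ⊥ := by
      rw [eq_bot_iff]
      rintro x ⟨hxU, hxs⟩
      rcases mem_span2.mp hxs with rfl | hxa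
      · simp
      · rw [hxa] at hxU
        exact absurd hxU ha0U
    have := Submodule.finrank_sup_add_finrank_inf_eq U (Submodule.span (ZMod 2) {a0})
    rw [hinf, finrank_bot, finrank_span_singleton ha0ne, hUrk] at this
    omega

lemma zero_not_bent {k m : ℕ} (hk : 0 < k) (F : (Fin (2 * k) → ZMod 2) → (Fin m → ZMod 2)) :
    ¬ IsBentV k (fun x => ip (0 : Fin m → ZMod 2) (F x)) := by
  intro h
  have hw : walshV (fun x => ip (0 : Fin m → ZMod 2) (F x)) 0 = 2 ^ (2 * k) := by
    simp only [walshV, ip_zero_left, add_zero, chr_zero]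
    rw [Finset.sum_const, Finset.card_univ]
    simp [ZMod.card]
  have hlt : (2 : ℤ) ^ k < 2 ^ (2 * k) := by
    apply pow_lt_pow_right₀ (by norm_num)
    omega
  have hpos : (0 : ℤ) < 2 ^ k := by positivity
  rcases h 0 with he | he <;> rw [hw] at he <;> omega

theorem stmt1 (k m : ℕ) (hk : 0 < k) (hm : k ≤ m)
    (F : (Fin (2 * k) → ZMod 2) → (Fin m → ZMod 2))
    (hcard :
      Nat.card {v : Fin m → ZMod 2 | ¬ IsBentV k (fun x => ip v (F x))} = 2 ^ (m - k)) :
    ∃ W : Submodule (ZMod 2) (Fin m → ZMod 2),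
      (W : Set (Fin m → ZMod 2)) =
        {v : Fin m → ZMod 2 | ¬ IsBentV k (fun x => ip v (F x))} ∧
      Module.finrank (ZMod 2) W = m - k := by
  classical
  set S : Set (Fin m → ZMod 2) := {v | ¬ IsBentV k (fun x => ip v (F x))} with hS
  have hrk : Module.finrank (ZMod 2) (Fin m → ZMod 2) = m := by
    rw [Module.finrank_pi, Fintype.card_fin]
  have h0S : (0 : Fin m → ZMod 2) ∈ S := zero_not_bent hk F
  have hncard : S.ncard = 2 ^ (m - k) := by
    rw [← Nat.card_coe_set_eq]
    exact hcard
  have hblockS : ∀ T : Submodule (ZMod 2) (Fin m → ZMod 2),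
      Module.finrank (ZMod 2) T = k + 1 → ∃ v ∈ T, v ≠ 0 ∧ v ∈ S := by
    intro T hT
    by_contra hcon
    push_neg at hcon
    apply nyberg hk F T hT
    intro v hv hvne
    have hnn := hcon v hv hvne
    rw [hS, Set.mem_setOf_eq, not_not] at hnn
    exact hnn
  obtain ⟨W, hWset, hWrk⟩ := bose_burton m (Fin m → ZMod 2) inferInstance inferInstance
    inferInstance hrk k S hk hm h0S (le_of_eq hncard) hblockS
  exact ⟨W, hWset, hWrk⟩
end

section
/- Let n = 2k and F(x) = x^s be a power function on F_{2^n}. If Tr^n_1(αF(x)) is bent for every α ∈ F_{2^n} \ F_{2^k}, then (2^k + 1) divides s. -/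
open Finset

variable {K : Type*} [Field K] [Fintype K] [Algebra (ZMod 2) K]

/-- The absolute trace `Tr^n_1 : F_{2^n} → F_2`. -/
noncomputable def tr (x : K) : ZMod 2 := Algebra.trace (ZMod 2) K x

/-- The Walsh transform of a Boolean function `f` on `K = F_{2^n}`. -/
noncomputable def walshF (f : K → ZMod 2) (l : K) : ℤ :=
  ∑ x, chr (f x + tr (l * x))

/-- `f` is bent on `K = F_{2^{2k}}`: all Walsh values are `±2^k`. -/
def IsBentF (k : ℕ) (f : K → ZMod 2) : Prop :=
  ∀ l : K, walshF f l = 2 ^ k ∨ walshF f l = -(2 ^ k)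

lemma chr_one_add (b : ZMod 2) : chr (1 + b) = - chr b := by
  fin_cases b <;> decide

omit [Fintype K] in
lemma tr_add (a b : K) : tr (a + b) = tr a + tr b := by
  simp [tr, map_add]

lemma sum_chr_tr (y : K) (hy : y ≠ 0) : ∑ α : K, chr (tr (α * y)) = 0 := by
  have : Module.Finite (ZMod 2) K := Module.Finite.of_finite
  have : Algebra.IsSeparable (ZMod 2) K := inferInstance
  have hnd := (traceForm_nondegenerate (ZMod 2) K).1 y
  simp_rw [Algebra.traceForm_apply] at hnd
  have hex : ∃ b : K, tr (y * b) ≠ 0 := by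
    by_contra! hf
    exact hy (hnd fun b => hf b)
  obtain ⟨b, hb⟩ := hex
  have hb1 : tr (b * y) = 1 := by
    rw [mul_comm] at hb
    have h01 : ∀ x : ZMod 2, x ≠ 0 → x = 1 := by decide
    exact h01 _ hb
  have key : ∑ α : K, chr (tr ((b + α) * y)) = ∑ α : K, chr (tr (α * y)) :=
    Equiv.sum_comp (Equiv.addLeft b) (fun α => chr (tr (α * y)))
  have key2 : ∑ α : K, chr (tr ((b + α) * y)) = - ∑ α : K, chr (tr (α * y)) := by
    rw [← Finset.sum_neg_distrib]
    refine Finset.sum_congr rfl fun α _ => ?_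
    rw [add_mul, tr_add, hb1, chr_one_add]
  rw [key] at key2
  linarith

lemma claimA (k s : ℕ) (hk : 0 < k) (hcard : Fintype.card K = 2 ^ (2 * k))
    (hall : ∀ x : K, x ≠ 0 → (x ^ s) ^ (2 ^ k) = x ^ s) : (2 ^ k + 1) ∣ s := by
  classical
  haveI : Fintype Kˣ := Fintype.ofFinite Kˣ
  have h2k : 2 ≤ 2 ^ k := by
    calc 2 = 2 ^ 1 := rfl
    _ ≤ 2 ^ k := Nat.pow_le_pow_right (by norm_num) hk
  have hpow : ∀ x : K, x ≠ 0 → x ^ (s * (2 ^ k - 1)) = 1 := by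
    intro x hx
    have hy : x ^ s ≠ 0 := pow_ne_zero _ hx
    have h := hall x hx
    have h1 : (x ^ s) ^ (2 ^ k) = (x ^ s) ^ (2 ^ k - 1) * x ^ s := by
      rw [← pow_succ]; congr 1; omega
    rw [h1] at h
    have h2 : (x ^ s) ^ (2 ^ k - 1) = 1 :=
      mul_right_cancel₀ hy (by rw [h, one_mul])
    rw [pow_mul]; exact h2
  obtain ⟨g, hg⟩ := IsCyclic.exists_generator (α := Kˣ)
  have hord : orderOf g = Nat.card Kˣ := orderOf_eq_card_of_forall_mem_zpowers hg
  have hgpow : g ^ (s * (2 ^ k - 1)) = 1 := by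
    have hv := hpow (g : K) (Units.ne_zero g)
    exact Units.ext (by push_cast; exact hv)
  have hdvd : Nat.card Kˣ ∣ s * (2 ^ k - 1) := by
    rw [← hord]; exact orderOf_dvd_of_pow_eq_one hgpow
  have hcardu : Nat.card Kˣ = 2 ^ (2 * k) - 1 := by
    rw [Nat.card_units, Nat.card_eq_fintype_card, hcard]
  have hfact : (2 ^ k - 1) * (2 ^ k + 1) = 2 ^ (2 * k) - 1 := by
    obtain ⟨b, hb⟩ : ∃ b, 2 ^ k = b + 1 := ⟨2 ^ k - 1, by omega⟩
    have h2 : 2 ^ (2 * k) = 2 ^ k * 2 ^ k := by rw [two_mul, pow_add]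
    have h3 : (b + 1) * (b + 1) = b * (b + 2) + 1 := by ring
    have h4 : (b + 1 - 1) * (b + 1 + 1) = b * (b + 2) := by
      simp only [Nat.add_sub_cancel]
    rw [h2, hb, h4]
    try omega
  rw [hcardu, ← hfact, mul_comm s] at hdvd
  exact (Nat.mul_dvd_mul_iff_left (by omega : 0 < 2 ^ k - 1)).mp hdvd

theorem stmt4 (k : ℕ) (hk : 0 < k) (hcard : Fintype.card K = 2 ^ (2 * k)) (s : ℕ)
    (hbent : ∀ α : K, α ^ (2 ^ k) ≠ α →
      IsBentF k (fun x => tr (α * x ^ s))) :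
    (2 ^ k + 1) ∣ s := by
  classical
  by_contra hdiv
  have hs : s ≠ 0 := fun h => hdiv (h ▸ dvd_zero _)
  obtain ⟨x0, hx0, hx0s⟩ : ∃ x0 : K, x0 ≠ 0 ∧ (x0 ^ s) ^ (2 ^ k) ≠ x0 ^ s := by
    by_contra h
    push_neg at h
    exact hdiv (claimA k s hk hcard h)
  set S : K → ℤ := fun α => ∑ x : K, chr (tr (α * x ^ s)) with hS
  have hwalsh : ∀ α : K, walshF (fun x => tr (α * x ^ s)) 0 = S α := by
    intro α
    unfold walshF
    refine Finset.sum_congr rfl fun x _ => ?_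
    simp [tr]
  have hbent' : ∀ α : K, α ^ (2 ^ k) ≠ α → S α = 2 ^ k ∨ S α = -(2 ^ k) := by
    intro α hα
    have h := hbent α hα 0
    rwa [hwalsh] at h
  have hSpm : ∀ α : K, α ≠ 0 → S α = 2 ^ k ∨ S α = -(2 ^ k) := by
    intro α hα
    by_cases hα2 : α ^ (2 ^ k) = α
    · have hkey : S α = S (α * x0 ^ s) := by
        have he := Equiv.sum_comp (Equiv.mulLeft₀ x0 hx0) (fun y => chr (tr (α * y ^ s)))
        simp only [Equiv.mulLeft₀_apply] at he
        rw [hS]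
        simp only []
        rw [← he]
        refine Finset.sum_congr rfl fun x _ => ?_
        rw [mul_pow, ← mul_assoc]
      have hne : (α * x0 ^ s) ^ (2 ^ k) ≠ α * x0 ^ s := by
        rw [mul_pow, hα2]
        intro h
        exact hx0s (mul_left_cancel₀ hα h)
      rw [hkey]; exact hbent' _ hne
    · exact hbent' α hα2
  have hinner : ∀ x : K, (∑ α : K, chr (tr (α * x ^ s)))
      = if x = 0 then (Fintype.card K : ℤ) else 0 := by
    intro x
    by_cases hx : x = 0
    · subst hx
      rw [if_pos rfl, zero_pow hs]
      simp [tr, chr]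
    · rw [if_neg hx]
      exact sum_chr_tr (x ^ s) (pow_ne_zero _ hx)
  have htot : ∑ α : K, S α = (Fintype.card K : ℤ) := by
    rw [hS]
    rw [Finset.sum_comm]
    rw [Finset.sum_congr rfl (fun (x : K) _ => hinner x)]
    simp
  have hS0 : S 0 = (Fintype.card K : ℤ) := by
    rw [hS]
    simp [tr, chr]
  have herase : ∑ α ∈ Finset.univ.erase (0 : K), S α = 0 := by
    have h := Finset.add_sum_erase Finset.univ S (Finset.mem_univ (0 : K))
    rw [htot, hS0] at h
    linarith
  set P := (Finset.univ.erase (0 : K)).filter (fun α => S α = 2 ^ k) with hP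
  set Q := (Finset.univ.erase (0 : K)).filter (fun α => ¬(S α = 2 ^ k)) with hQ
  have hsplit : ∑ α ∈ P, S α + ∑ α ∈ Q, S α = 0 := by
    rw [hP, hQ, Finset.sum_filter_add_sum_filter_not]; exact herase
  have hPsum : ∑ α ∈ P, S α = (P.card : ℤ) * 2 ^ k := by
    rw [Finset.sum_congr rfl (fun α hα => (Finset.mem_filter.mp hα).2), Finset.sum_const,
      nsmul_eq_mul]
  have hQsum : ∑ α ∈ Q, S α = -((Q.card : ℤ) * 2 ^ k) := by
    have hall : ∀ α ∈ Q, S α = -(2 ^ k : ℤ) := by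
      intro α hα
      rcases Finset.mem_filter.mp hα with ⟨hα1, hα2⟩
      rcases hSpm α (Finset.ne_of_mem_erase hα1) with h | h
      · exact absurd h hα2
      · exact h
    rw [Finset.sum_congr rfl hall, Finset.sum_const, nsmul_eq_mul]
    ring
  have h2kpos : (0 : ℤ) < 2 ^ k := by positivity
  have hcards : P.card = Q.card := by
    have h : (P.card : ℤ) * 2 ^ k = (Q.card : ℤ) * 2 ^ k := by
      rw [hPsum, hQsum] at hsplit; linarith
    exact_mod_cast mul_right_cancel₀ (ne_of_gt h2kpos) h
  have hPQ : P.card + Q.card = Fintype.card K - 1 := by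
    rw [hP, hQ, Finset.card_filter_add_card_filter_not,
      Finset.card_erase_of_mem (Finset.mem_univ _), Finset.card_univ]
  have heven : 2 ∣ Fintype.card K := by
    rw [hcard]; exact dvd_pow_self 2 (by omega)
  have hpos : 0 < Fintype.card K := Fintype.card_pos
  omega
end
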